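/- For every 1 ≤ s ≤ q_1, the coefficients of t^i for all n−sr+1 ≤ i ≤ n+r in the power series (1 + b_{r-1}t + ⋯ + b_0 t^r)^{-s}·(1 + a_{n-1}t + ⋯ + a_0 t^n) ∈ R[[t]] all lie in the ideal of R generated by ψ_0,…,ψ_{sr-1}. -/

import Mathlib

open MvPolynomial Matrix

noncomputable section

namespace TB

/-- The polynomial ring `ℂ[a_0,…,a_{n-1},b_0,…,b_{r-1}]`: variable `Sum.inl i` is `a_i`
and `Sum.inr j` is `b_j`. -/
abbrev R (n r : ℕ) : Type := MvPolynomial (Fin n ⊕ Fin r) ℂ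

/-- The power series `1 + (cf 1)·t + ⋯ + (cf m)·t^m`. -/
def ser {A : Type*} [CommRing A] (m : ℕ) (cf : ℕ → A) : PowerSeries A :=
  PowerSeries.mk fun k => if k = 0 then 1 else if k ≤ m then cf k else 0

/-- `1 + a_{n-1} t + ⋯ + a_0 t^n`. -/
def Aser (n r : ℕ) : PowerSeries (R n r) :=
  ser n fun k => if h : 1 ≤ k ∧ k ≤ n then X (Sum.inl ⟨n - k, by omega⟩) else 0

/-- `1 + b_{r-1} t + ⋯ + b_0 t^r`. -/
def Bser (n r : ℕ) : PowerSeries (R n r) :=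
  ser r fun k => if h : 1 ≤ k ∧ k ≤ r then X (Sum.inr ⟨r - k, by omega⟩) else 0

/-- `1 + d_{n-1} t + ⋯ + d_0 t^n`. -/
def Dser (n r : ℕ) (d : Fin n → R n r) : PowerSeries (R n r) :=
  ser n fun k => if h : 1 ≤ k ∧ k ≤ n then d ⟨n - k, by omega⟩ else 0

/-- `1 + d_{n-1} t + ⋯ + d_1 t^{n-1}`. -/
def Dhatser (n r : ℕ) (d : Fin n → R n r) : PowerSeries (R n r) :=
  ser (n - 1) fun k => if h : 1 ≤ k ∧ k ≤ n - 1 then d ⟨n - k, by omega⟩ else 0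

/-- `f(x) = x^n + a_{n-1}x^{n-1} + ⋯ + a_0`. -/
def fpoly (n r : ℕ) : Polynomial (R n r) :=
  Polynomial.X ^ n + ∑ i : Fin n, Polynomial.C (X (Sum.inl i)) * Polynomial.X ^ (i : ℕ)

/-- `g(x) = x^r + b_{r-1}x^{r-1} + ⋯ + b_0`. -/
def gpoly (n r : ℕ) : Polynomial (R n r) :=
  Polynomial.X ^ r + ∑ j : Fin r, Polynomial.C (X (Sum.inr j)) * Polynomial.X ^ (j : ℕ)

/-- The coefficient `c_k` of `f·g`, for `0 ≤ k ≤ n+r-1`. -/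
def cc (n r : ℕ) (k : Fin (n + r)) : R n r := (fpoly n r * gpoly n r).coeff (k : ℕ)

/-- `d_0, …, d_{n-1}` are the unique polynomials with
`(1 + b_{r-1}t + ⋯ + b_0 t^r)(1 + d_{n-1}t + ⋯ + d_0 t^n) ≡ 1 + a_{n-1}t + ⋯ + a_0 t^n (mod t^{n+1})`. -/
def dSpec (n r : ℕ) (d : Fin n → R n r) : Prop :=
  ∀ k ≤ n, PowerSeries.coeff k (Bser n r * Dser n r d)
    = PowerSeries.coeff k (Aser n r)

/-- `ψ_i = d_i` for `0 ≤ i ≤ r-1`, and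
`ψ_{s·r+i} = ∂^s d_{r-1} / (∂b_0^{s-1} ∂b_{r-1-i})` for `s ≥ 1`, `0 ≤ i ≤ r-1`. -/
def psi (n r : ℕ) (hr : 0 < r) (hrn : r ≤ n) (d : Fin n → R n r) (m : ℕ) : R n r :=
  if h : m < r then d ⟨m, by omega⟩
  else
    (fun q => pderiv (Sum.inr (⟨0, hr⟩ : Fin r)) q)^[m / r - 1]
      (pderiv (Sum.inr (⟨r - 1 - m % r, by omega⟩ : Fin r)) (d ⟨r - 1, by omega⟩))

/-- The `m×m` lower shift matrix over `R n r`. -/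
def Lmat (n r m : ℕ) : Matrix (Fin m) (Fin m) (R n r) :=
  Matrix.of fun i j => if (i : ℕ) = (j : ℕ) + 1 then 1 else 0

/-- `B = I_n + b_{r-1}L_n + ⋯ + b_0 L_n^r`. -/
def Bmat (n r : ℕ) (hr : 0 < r) : Matrix (Fin n) (Fin n) (R n r) :=
  1 + ∑ k ∈ Finset.range r, (X (Sum.inr (⟨r - 1 - k, by omega⟩ : Fin r)) : R n r) • Lmat n r n ^ (k + 1)

/-- `D̂ = I_n + d_{n-1}L_n + ⋯ + d_1 L_n^{n-1}`. -/
def Dhat (n r : ℕ) (hn : 0 < n) (d : Fin n → R n r) : Matrix (Fin n) (Fin n) (R n r) :=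
  1 + ∑ k ∈ Finset.range (n - 1), d ⟨n - 1 - k, by omega⟩ • Lmat n r n ^ (k + 1)

/-- `D`: the first `r` columns of `D̂`. -/
def Dmat (n r : ℕ) (hn : 0 < n) (hrn : r ≤ n) (d : Fin n → R n r) :
    Matrix (Fin n) (Fin r) (R n r) :=
  (Dhat n r hn d).submatrix id (Fin.castLE hrn)

/-- `Â = I_n + a_{n-1}L_n + ⋯ + a_1 L_n^{n-1}`. -/
def Ahat (n r : ℕ) (hn : 0 < n) : Matrix (Fin n) (Fin n) (R n r) :=
  1 + ∑ k ∈ Finset.range (n - 1),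
    (X (Sum.inl (⟨n - 1 - k, by omega⟩ : Fin n)) : R n r) • Lmat n r n ^ (k + 1)

/-- `A`: the first `r` columns of `Â`. -/
def Amat (n r : ℕ) (hn : 0 < n) (hrn : r ≤ n) : Matrix (Fin n) (Fin r) (R n r) :=
  (Ahat n r hn).submatrix id (Fin.castLE hrn)

/-- The Jacobian matrix of a family `p` of elements of `R n r`: the row of index `i` is
`(∂p_i/∂a_{n-1}, …, ∂p_i/∂a_0, ∂p_i/∂b_{r-1}, …, ∂p_i/∂b_0)`. -/
def jac {n r : ℕ} {ι : Type*} (p : ι → R n r) : Matrix ι (Fin (n + r)) (R n r) :=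
  Matrix.of fun i j =>
    if h : (j : ℕ) < n then pderiv (Sum.inl (⟨n - 1 - (j : ℕ), by omega⟩ : Fin n)) (p i)
    else
      pderiv (Sum.inr (⟨r - 1 - ((j : ℕ) - n), by have := j.isLt; omega⟩ : Fin r)) (p i)

/-- The set of all `k×k` minors of a matrix. -/
def minorsSet {n r : ℕ} {ι : Type*} (k : ℕ) (M : Matrix ι (Fin (n + r)) (R n r)) :
    Set (R n r) :=
  { x | ∃ (ri : Fin k → ι) (ci : Fin k → Fin (n + r)), x = (M.submatrix ri ci).det }

/-- Evaluation at the origin `a_i = b_j = 0`. -/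
def ev0 (n r : ℕ) : R n r →+* ℂ := eval fun _ => 0

/-- The maximal ideal `(a_0,…,a_{n-1},b_0,…,b_{r-1})`. -/
def mIdeal (n r : ℕ) : Ideal (R n r) :=
  Ideal.span (Set.range (X : (Fin n ⊕ Fin r) → R n r))

/-- `1 + g_1 t + ⋯ + g_{r_1} t^{r_1}` over `S = ℂ[g_1,…,g_{r_1},b_0,…,b_{r-1}] = R r1 r`,
where `g_k` is the variable `Sum.inl ⟨k-1⟩`. -/
def Gser (r1 r : ℕ) : PowerSeries (R r1 r) :=
  ser r1 fun k => if h : 1 ≤ k ∧ k ≤ r1 then X (Sum.inl ⟨k - 1, by omega⟩) else 0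

/-- `1 + w_{r-1} t + ⋯ + w_0 t^r`. -/
def Wser (r1 r : ℕ) (w : Fin r → R r1 r) : PowerSeries (R r1 r) :=
  ser r fun k => if h : 1 ≤ k ∧ k ≤ r then w ⟨r - k, by omega⟩ else 0

/-- `1 + w_{r-1} t + ⋯ + w_1 t^{r-1}`. -/
def Whatser (r1 r : ℕ) (w : Fin r → R r1 r) : PowerSeries (R r1 r) :=
  ser (r - 1) fun k => if h : 1 ≤ k ∧ k ≤ r - 1 then w ⟨r - k, by omega⟩ else 0

/-- `w_0,…,w_{r-1}` are the unique polynomials with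
`(1 + g_1 t + ⋯ + g_{r_1}t^{r_1})(1 + w_{r-1}t + ⋯ + w_0 t^r) ≡ 1 + b_{r-1}t + ⋯ + b_0 t^r
(mod t^{r+1})`. -/
def wSpec (r1 r : ℕ) (w : Fin r → R r1 r) : Prop :=
  ∀ k ≤ r, PowerSeries.coeff k (Gser r1 r * Wser r1 r w)
    = PowerSeries.coeff k (Bser r1 r)

/-- `φ'_i = w_i` for `0 ≤ i ≤ r_1-1`, and
`φ'_{s·r_1+i} = ∂^s w_{r_1-1} / (∂g_{r_1}^{s-1} ∂g_{1+i})` for `s ≥ 1`, `0 ≤ i ≤ r_1-1`. -/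
def phi' (r1 r : ℕ) (h1 : 0 < r1) (h2 : r1 < r) (w : Fin r → R r1 r) (m : ℕ) : R r1 r :=
  if h : m < r1 then w ⟨m, by omega⟩
  else
    (fun q => pderiv (Sum.inl (⟨r1 - 1, by omega⟩ : Fin r1)) q)^[m / r1 - 1]
      (pderiv (Sum.inl (⟨m % r1, Nat.mod_lt m h1⟩ : Fin r1)) (w ⟨r1 - 1, by omega⟩))

/-- The substitution `g_k ↦ γ_{n-k}`, `b_j ↦ b_j`, from `S = R r1 r` to `R n r`. -/
def subst (n r r1 : ℕ) (γ : ℕ → R n r) : R r1 r →ₐ[ℂ] R n r :=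
  aeval (Sum.elim (fun i : Fin r1 => γ (n - ((i : ℕ) + 1))) fun j : Fin r => X (Sum.inr j))


/-- From `n = q_1·r + r_1` with `q_1 ≥ 1` we get `r ≤ n`. -/
theorem rle (q1 r r1 n : ℕ) (hq1 : 1 ≤ q1) (hn : n = q1 * r + r1) : r ≤ n := by
  have := Nat.le_mul_of_pos_left r hq1
  omega


section Aux

open PowerSeries

variable {n r : ℕ}

/-- Coefficientwise partial derivative of a power series over `R n r`. -/
def Pd (v : Fin n ⊕ Fin r) (F : PowerSeries (R n r)) : PowerSeries (R n r) :=
  PowerSeries.mk fun k => pderiv v (PowerSeries.coeff k F)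

lemma coeff_Pd (v : Fin n ⊕ Fin r) (F : PowerSeries (R n r)) (k : ℕ) :
    PowerSeries.coeff k (Pd v F) = pderiv v (PowerSeries.coeff k F) :=
  PowerSeries.coeff_mk _ _

lemma Pd_mul (v : Fin n ⊕ Fin r) (F G : PowerSeries (R n r)) :
    Pd v (F * G) = Pd v F * G + F * Pd v G := by
  apply PowerSeries.ext; intro k
  simp only [coeff_Pd, PowerSeries.coeff_mul, map_add, map_sum, pderiv_mul]
  rw [← Finset.sum_add_distrib]

lemma Pd_one (v : Fin n ⊕ Fin r) : Pd v (1 : PowerSeries (R n r)) = 0 := by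
  apply PowerSeries.ext; intro k
  simp only [coeff_Pd, PowerSeries.coeff_one]
  split <;> simp

/-- Constant power series with a complex value. -/
def Cc (c : ℂ) : PowerSeries (R n r) := PowerSeries.C (MvPolynomial.C c)

lemma coeff_Cc_mul (c : ℂ) (F : PowerSeries (R n r)) (k : ℕ) :
    PowerSeries.coeff k ((Cc c : PowerSeries (R n r)) * F)
      = MvPolynomial.C c * PowerSeries.coeff k F := by
  rw [Cc, PowerSeries.coeff_C_mul]

lemma Pd_Cc_mul (v : Fin n ⊕ Fin r) (c : ℂ) (F : PowerSeries (R n r)) :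
    Pd v ((Cc c : PowerSeries (R n r)) * F) = Cc c * Pd v F := by
  apply PowerSeries.ext; intro k
  simp [coeff_Pd, coeff_Cc_mul, pderiv_mul]

lemma Pd_X_pow_mul (v : Fin n ⊕ Fin r) (e : ℕ) (F : PowerSeries (R n r)) :
    Pd v ((PowerSeries.X : PowerSeries (R n r)) ^ e * F) = PowerSeries.X ^ e * Pd v F := by
  apply PowerSeries.ext; intro k
  simp only [coeff_Pd, PowerSeries.coeff_X_pow_mul']
  split <;> simp [coeff_Pd]

lemma coeff_Bser_zero : PowerSeries.coeff 0 (Bser n r) = 1 := by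
  rw [Bser, ser, PowerSeries.coeff_mk]; simp

lemma coeff_Bser_zero_of_gt {k : ℕ} (hk : r < k) : PowerSeries.coeff k (Bser n r) = 0 := by
  rw [Bser, ser, PowerSeries.coeff_mk]
  rw [if_neg (by omega), if_neg (by omega)]

lemma coeff_Aser_zero_of_gt {k : ℕ} (hk : n < k) : PowerSeries.coeff k (Aser n r) = 0 := by
  rw [Aser, ser, PowerSeries.coeff_mk]
  rw [if_neg (by omega), if_neg (by omega)]

lemma coeff_Dser (d : Fin n → R n r) {k : ℕ} (h1 : 1 ≤ k) (h2 : k ≤ n) :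
    PowerSeries.coeff k (Dser n r d) = d ⟨n - k, by omega⟩ := by
  rw [Dser, ser, PowerSeries.coeff_mk, if_neg (by omega), if_pos h2, dif_pos ⟨h1, h2⟩]

lemma Pd_Bser (j : Fin r) :
    Pd (Sum.inr j) (Bser n r) = (PowerSeries.X : PowerSeries (R n r)) ^ (r - (j : ℕ)) := by
  apply PowerSeries.ext; intro k
  rw [coeff_Pd, PowerSeries.coeff_X_pow, Bser, ser, PowerSeries.coeff_mk]
  have hj := j.isLt
  by_cases h1 : k = r - (j : ℕ)
  · subst h1
    rw [if_neg (by omega), if_pos (by omega), dif_pos ⟨by omega, by omega⟩, if_pos rfl]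
    have he : (⟨r - (r - (j : ℕ)), by omega⟩ : Fin r) = j :=
      Fin.ext (by show r - (r - (j : ℕ)) = (j : ℕ); omega)
    rw [he, pderiv_X_self]
  · rw [if_neg h1]
    by_cases h0 : k = 0
    · subst h0; rw [if_pos rfl]; exact pderiv_one
    · rw [if_neg h0]
      by_cases h2 : k ≤ r
      · rw [if_pos h2, dif_pos ⟨by omega, h2⟩]
        refine pderiv_X_of_ne ?_
        intro hc
        rw [Sum.inr.injEq, Fin.ext_iff] at hc
        simp only at hc
        omega
      · rw [if_neg h2, map_zero]

lemma Pd_Aser (j : Fin r) : Pd (Sum.inr j) (Aser n r) = 0 := by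
  apply PowerSeries.ext; intro k
  rw [coeff_Pd, Aser, ser, PowerSeries.coeff_mk, map_zero]
  by_cases h0 : k = 0
  · subst h0; rw [if_pos rfl]; exact pderiv_one
  · rw [if_neg h0]
    by_cases h2 : k ≤ n
    · rw [if_pos h2, dif_pos ⟨by omega, h2⟩]
      exact pderiv_X_of_ne (by simp)
    · rw [if_neg h2, map_zero]

end Aux

section Aux2

open PowerSeries

variable {n r : ℕ}

lemma Pd_Binv (v : Fin n ⊕ Fin r) (Binv : PowerSeries (R n r))
    (hBinv : Bser n r * Binv = 1) :
    Pd v Binv = -(Pd v (Bser n r) * (Binv * Binv)) := by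
  have h0 : Pd v (Bser n r) * Binv + Bser n r * Pd v Binv = 0 := by
    rw [← Pd_mul, hBinv, Pd_one]
  linear_combination Binv * h0 - Pd v Binv * hBinv

lemma Pd_Binv_pow (v : Fin n ⊕ Fin r) (Binv : PowerSeries (R n r))
    (hBinv : Bser n r * Binv = 1) (e : ℕ)
    (hPdB : Pd v (Bser n r) = (PowerSeries.X : PowerSeries (R n r)) ^ e) :
    ∀ k : ℕ, Pd v (Binv ^ k)
      = -(Cc (k : ℂ) * ((PowerSeries.X : PowerSeries (R n r)) ^ e * Binv ^ (k + 1))) := by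
  intro k
  induction k with
  | zero =>
    rw [pow_zero, Pd_one]
    have : (Cc ((0 : ℕ) : ℂ) : PowerSeries (R n r)) = 0 := by
      simp [Cc]
    rw [this]; ring
  | succ k ih =>
    rw [pow_succ, Pd_mul, ih, Pd_Binv v Binv hBinv, hPdB]
    have : (Cc (((k + 1 : ℕ)) : ℂ) : PowerSeries (R n r)) = Cc ((k : ℕ) : ℂ) + 1 := by
      simp [Cc]
    rw [this]; ring

lemma Hform (Binv : PowerSeries (R n r)) (hBinv : Bser n r * Binv = 1)
    (hr : 0 < r) (i : ℕ) (hi : i < r) :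
    ∀ u : ℕ, (Pd (Sum.inr (⟨0, hr⟩ : Fin r)))^[u]
        (Pd (Sum.inr (⟨r - 1 - i, by omega⟩ : Fin r)) (Binv * Aser n r))
      = Cc ((-1) ^ (u + 1) * (Nat.factorial (u + 1) : ℕ)) *
          ((PowerSeries.X : PowerSeries (R n r)) ^ (i + 1 + u * r) *
            (Binv ^ (u + 2) * Aser n r)) := by
  have hPdB0 : Pd (Sum.inr (⟨0, hr⟩ : Fin r)) (Bser n r)
      = (PowerSeries.X : PowerSeries (R n r)) ^ r := by
    rw [Pd_Bser]; norm_num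
  have hPdBi : Pd (Sum.inr (⟨r - 1 - i, by omega⟩ : Fin r)) (Bser n r)
      = (PowerSeries.X : PowerSeries (R n r)) ^ (i + 1) := by
    rw [Pd_Bser]
    congr 1
    show r - (r - 1 - i) = i + 1
    omega
  intro u
  induction u with
  | zero =>
    rw [Function.iterate_zero_apply, Pd_mul, Pd_Aser, mul_zero, add_zero,
      Pd_Binv _ Binv hBinv, hPdBi]
    have : (Cc ((-1) ^ (0 + 1) * (Nat.factorial (0 + 1) : ℕ)) : PowerSeries (R n r)) = -1 := by
      simp [Cc]
    rw [this]
    ring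
  | succ u ih =>
    rw [Function.iterate_succ_apply', ih, Pd_Cc_mul, Pd_X_pow_mul, Pd_mul, Pd_Aser, mul_zero,
      add_zero, Pd_Binv_pow _ Binv hBinv r hPdB0 (u + 2)]
    have hc : (Cc ((-1) ^ (u + 1 + 1) * (Nat.factorial (u + 1 + 1) : ℕ)) : PowerSeries (R n r))
        = Cc ((-1) ^ (u + 1) * (Nat.factorial (u + 1) : ℕ)) * -Cc (((u + 2 : ℕ)) : ℂ) := by
      rw [Cc, Cc, Cc, ← map_neg (PowerSeries.C (R := R n r)), ← _root_.map_mul,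
        ← map_neg (MvPolynomial.C (σ := Fin n ⊕ Fin r) (R := ℂ)), ← _root_.map_mul]
      congr 2
      push_cast [Nat.factorial_succ]
      ring
    rw [hc]
    have he : i + 1 + (u + 1) * r = i + 1 + u * r + r := by ring
    rw [he]
    ring

end Aux2

section Aux3

open PowerSeries

variable {n r : ℕ}

/-- Congruence of power series modulo `t^{N+1}`. -/
def Cong (N : ℕ) (F G : PowerSeries (R n r)) : Prop :=
  ∀ k ≤ N, PowerSeries.coeff k F = PowerSeries.coeff k G

lemma Cong.mulL {N : ℕ} {F G : PowerSeries (R n r)} (P : PowerSeries (R n r))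
    (h : Cong N F G) : Cong N (P * F) (P * G) := by
  intro k hk
  rw [PowerSeries.coeff_mul, PowerSeries.coeff_mul]
  refine Finset.sum_congr rfl fun p hp => ?_
  rw [h p.2 (le_trans (by have := Finset.HasAntidiagonal.mem_antidiagonal.mp hp; omega) hk)]

lemma Cong.pd {N : ℕ} {F G : PowerSeries (R n r)} (v : Fin n ⊕ Fin r)
    (h : Cong N F G) : Cong N (Pd v F) (Pd v G) := by
  intro k hk
  rw [coeff_Pd, coeff_Pd, h k hk]

lemma Cong.pdIter {N : ℕ} {F G : PowerSeries (R n r)} (v : Fin n ⊕ Fin r) (u : ℕ)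
    (h : Cong N F G) : Cong N ((Pd v)^[u] F) ((Pd v)^[u] G) := by
  induction u with
  | zero => exact h
  | succ u ih =>
    rw [Function.iterate_succ_apply', Function.iterate_succ_apply']
    exact ih.pd v

lemma coeff_PdIter (v : Fin n ⊕ Fin r) (u : ℕ) (F : PowerSeries (R n r)) (k : ℕ) :
    PowerSeries.coeff k ((Pd v)^[u] F) = (fun q => pderiv v q)^[u] (PowerSeries.coeff k F) := by
  induction u with
  | zero => rfl
  | succ u ih =>
    rw [Function.iterate_succ_apply', Function.iterate_succ_apply', coeff_Pd, ih]

lemma congD (d : Fin n → R n r) (hd : dSpec n r d) (Binv : PowerSeries (R n r))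
    (hBinv : Bser n r * Binv = 1) :
    Cong n (Dser n r d) (Binv * Aser n r) := by
  have h1 : Cong n (Bser n r * Dser n r d) (Aser n r) := hd
  have h2 := h1.mulL Binv
  have h3 : Binv * (Bser n r * Dser n r d) = Dser n r d := by
    rw [← mul_assoc, mul_comm Binv, hBinv, one_mul]
  rwa [h3] at h2

/-- Bottom-window identity, case `s = 1`. -/
lemma lemA1 (hr : 0 < r) (hrn : r ≤ n) (d : Fin n → R n r) (hd : dSpec n r d)
    (Binv : PowerSeries (R n r)) (hBinv : Bser n r * Binv = 1)
    (i : ℕ) (hi : i < r) :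
    PowerSeries.coeff (n - i) (Binv * Aser n r) = d ⟨i, by omega⟩ := by
  rw [← congD d hd Binv hBinv (n - i) (by omega), coeff_Dser d (by omega) (by omega)]
  congr 1
  exact Fin.ext (by show n - (n - i) = i; omega)

/-- Bottom-window identity, general case: `ψ_{(u+1)r+i}` versus a coefficient of
`Binv^{u+2}·A`. -/
lemma lemA2 (q1 r1 : ℕ) (h1 : 0 < r1) (h2 : r1 < r) (hn : n = q1 * r + r1)
    (hr : 0 < r) (hrn : r ≤ n)
    (d : Fin n → R n r) (hd : dSpec n r d)
    (Binv : PowerSeries (R n r)) (hBinv : Bser n r * Binv = 1)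
    (u i : ℕ) (hu : u + 2 ≤ q1) (hi : i < r) :
    psi n r hr hrn d ((u + 1) * r + i)
      = MvPolynomial.C ((-1) ^ (u + 1) * (Nat.factorial (u + 1) : ℕ) : ℂ)
        * PowerSeries.coeff (n - (u + 1) * r - i) (Binv ^ (u + 2) * Aser n r) := by
  have hq : (u + 2) * r ≤ q1 * r := Nat.mul_le_mul_right r hu
  have hrr : r ≤ (u + 1) * r := Nat.le_mul_of_pos_left r (Nat.succ_pos u)
  have e1 : (u + 1) * r = u * r + r := by ring
  have e2 : (u + 2) * r = u * r + 2 * r := by ring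
  -- unfold psi
  have hdiv : ((u + 1) * r + i) / r = u + 1 := by
    rw [add_comm, mul_comm, Nat.add_mul_div_left _ _ hr, Nat.div_eq_of_lt hi, zero_add]
  have hmod : ((u + 1) * r + i) % r = i := by
    rw [add_comm, mul_comm, Nat.add_mul_mod_self_left, Nat.mod_eq_of_lt hi]
  rw [psi, dif_neg (by omega)]
  simp only [hdiv, hmod, Nat.add_sub_cancel]
  -- the congruence
  have hcong := ((congD d hd Binv hBinv).pd
      (Sum.inr (⟨r - 1 - i, by omega⟩ : Fin r))).pdIter (Sum.inr (⟨0, hr⟩ : Fin r)) u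
  rw [Hform Binv hBinv hr i hi u] at hcong
  have hkey := hcong (n - r + 1) (by omega)
  rw [coeff_PdIter, coeff_Pd, coeff_Cc_mul, PowerSeries.coeff_X_pow_mul',
    if_pos (by omega : i + 1 + u * r ≤ n - r + 1)] at hkey
  rw [coeff_Dser d (by omega) (by omega)] at hkey
  have hfin : (⟨n - (n - r + 1), by omega⟩ : Fin n) = ⟨r - 1, by omega⟩ :=
    Fin.ext (by show n - (n - r + 1) = r - 1; omega)
  rw [hfin] at hkey
  have hidx : n - r + 1 - (i + 1 + u * r) = n - (u + 1) * r - i := by omega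
  rw [hidx] at hkey
  exact hkey

end Aux3

section Aux4

open PowerSeries

variable {n r : ℕ}

/-- One step of the outer induction: membership for exponent `s+1` given it for `s`. -/
lemma main_aux (q1 r1 : ℕ) (h1 : 0 < r1) (h2 : r1 < r) (hn : n = q1 * r + r1)
    (hr : 0 < r) (hrn : r ≤ n)
    (d : Fin n → R n r) (hd : dSpec n r d)
    (Binv : PowerSeries (R n r)) (hBinv : Bser n r * Binv = 1)
    (s : ℕ) (hsq : s + 1 ≤ q1) (J : Ideal (R n r))
    (hJpsi : ∀ m' : ℕ, m' < (s + 1) * r → psi n r hr hrn d m' ∈ J)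
    (hprev : ∀ m, n - s * r + 1 ≤ m → m ≤ n + r →
      PowerSeries.coeff m (Binv ^ s * Aser n r) ∈ J) :
    ∀ m, n - (s + 1) * r + 1 ≤ m → m ≤ n + r →
      PowerSeries.coeff m (Binv ^ (s + 1) * Aser n r) ∈ J := by
  have hq : (s + 1) * r ≤ q1 * r := Nat.mul_le_mul_right r hsq
  have e1 : (s + 1) * r = s * r + r := by ring
  intro m
  induction m using Nat.strong_induction_on with
  | _ m ihm =>
    intro hm1 hm2
    by_cases hcase : m ≤ n - s * r
    · -- bottom window
      set i := n - s * r - m with hi_def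
      have hi : i < r := by omega
      have hm : m = n - s * r - i := by omega
      rcases Nat.eq_zero_or_pos s with hs0 | hs1
      · subst hs0
        have hmni : m = n - i := by omega
        rw [hmni, pow_one]
        rw [lemA1 hr hrn d hd Binv hBinv i hi]
        have hpsi : psi n r hr hrn d i = d ⟨i, by omega⟩ := by
          rw [psi, dif_pos hi]
        rw [← hpsi]
        exact hJpsi i (by omega)
      · -- s ≥ 1, use lemA2 with u = s - 1
        obtain ⟨u, rfl⟩ : ∃ u, s = u + 1 := ⟨s - 1, by omega⟩
        have e2 : (u + 1) * r = u * r + r := by ring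
        have e3 : (u + 2) * r = u * r + 2 * r := by ring
        have hA2 := lemA2 q1 r1 h1 h2 hn hr hrn d hd Binv hBinv u i (by omega) hi
        have hmm : m = n - (u + 1) * r - i := by omega
        set c : ℂ := (-1) ^ (u + 1) * (Nat.factorial (u + 1) : ℕ) with hc_def
        have hc : c ≠ 0 := by
          apply mul_ne_zero
          · exact pow_ne_zero _ (by norm_num)
          · exact_mod_cast Nat.cast_ne_zero.mpr (Nat.factorial_ne_zero (u + 1))
        have hco : PowerSeries.coeff (n - (u + 1) * r - i)
            (Binv ^ (u + 2) * Aser n r)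
            = MvPolynomial.C c⁻¹ * psi n r hr hrn d ((u + 1) * r + i) := by
          rw [hA2, ← mul_assoc, ← _root_.map_mul, inv_mul_cancel₀ hc, MvPolynomial.C_1, one_mul]
        rw [hmm]
        have : u + 1 + 1 = u + 2 := rfl
        rw [this, hco]
        exact Ideal.mul_mem_left _ _ (hJpsi ((u + 1) * r + i) (by omega))
    · -- upper part: use the recursion coeff m (B⁻ˢA) = Σ Bⱼ coeff_{m-j}(B⁻⁽ˢ⁺¹⁾A)
      have hBBA : Bser n r * (Binv ^ (s + 1) * Aser n r) = Binv ^ s * Aser n r := by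
        rw [pow_succ]
        linear_combination (Binv ^ s * Aser n r) * hBinv
      have hsum := PowerSeries.coeff_mul m (Bser n r) (Binv ^ (s + 1) * Aser n r)
      rw [hBBA] at hsum
      have h0m : ((0 : ℕ), m) ∈ Finset.HasAntidiagonal.antidiagonal m := by
        rw [Finset.HasAntidiagonal.mem_antidiagonal]; omega
      rw [← Finset.add_sum_erase _ _ h0m, coeff_Bser_zero, one_mul] at hsum
      have hco : PowerSeries.coeff m (Binv ^ (s + 1) * Aser n r)
          = PowerSeries.coeff m (Binv ^ s * Aser n r)
            - ∑ p ∈ (Finset.HasAntidiagonal.antidiagonal m).erase (0, m),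
                PowerSeries.coeff p.1 (Bser n r) *
                  PowerSeries.coeff p.2 (Binv ^ (s + 1) * Aser n r) := by
        rw [hsum]; ring
      rw [hco]
      refine sub_mem (hprev m (by omega) hm2) (Ideal.sum_mem _ fun p hp => ?_)
      obtain ⟨hne, hmem⟩ := Finset.mem_erase.mp hp
      have hpm : p.1 + p.2 = m := Finset.HasAntidiagonal.mem_antidiagonal.mp hmem
      have hp1 : p.1 ≠ 0 := by
        intro h0
        exact hne (Prod.ext h0 (by omega))
      by_cases hpr : p.1 ≤ r
      · refine Ideal.mul_mem_left _ _ (ihm p.2 (by omega) (by omega) (by omega))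
      · rw [coeff_Bser_zero_of_gt (by omega), zero_mul]
        exact zero_mem J
    
end Aux4


/-- Lemma 3.11: for `1 ≤ s ≤ q_1`, the coefficients of `t^i`,
`n-sr+1 ≤ i ≤ n+r`, in `B^{-s}·A` all lie in `(ψ_0,…,ψ_{sr-1})`. -/
theorem stmt12 (n r q1 r1 : ℕ) (hq1 : 1 ≤ q1) (h1 : 0 < r1) (h2 : r1 < r)
    (hn : n = q1 * r + r1)
    (d : Fin n → R n r) (hd : dSpec n r d)
    (Binv : PowerSeries (R n r)) (hBinv : Bser n r * Binv = 1) :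
    ∀ s, 1 ≤ s → s ≤ q1 → ∀ i, n - s * r + 1 ≤ i → i ≤ n + r →
      PowerSeries.coeff i (Binv ^ s * Aser n r) ∈
        Ideal.span (Set.range fun m : Fin (s * r) =>
          psi n r (by omega) (rle q1 r r1 n (by omega) hn) d (m : ℕ)) := by
  have hr : 0 < r := by omega
  have hrn : r ≤ n := rle q1 r r1 n hq1 hn
  suffices H : ∀ t, t + 1 ≤ q1 → ∀ i, n - (t + 1) * r + 1 ≤ i → i ≤ n + r →
      PowerSeries.coeff i (Binv ^ (t + 1) * Aser n r) ∈
        Ideal.span (Set.range fun m : Fin ((t + 1) * r) =>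
          psi n r hr hrn d (m : ℕ)) by
    intro s hs1 hsq i hi1 hi2
    obtain ⟨t, rfl⟩ : ∃ t, s = t + 1 := ⟨s - 1, by omega⟩
    exact H t hsq i hi1 hi2
  intro t
  induction t with
  | zero =>
    intro htq
    refine main_aux q1 r1 h1 h2 hn hr hrn d hd Binv hBinv 0 htq _ ?_ ?_
    · intro m' hm'
      exact Ideal.subset_span ⟨⟨m', hm'⟩, rfl⟩
    · intro m hm1 hm2
      rw [pow_zero, one_mul, coeff_Aser_zero_of_gt (by omega)]
      exact zero_mem _
  | succ t ih =>
    intro htq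
    refine main_aux q1 r1 h1 h2 hn hr hrn d hd Binv hBinv (t + 1) htq _ ?_ ?_
    · intro m' hm'
      exact Ideal.subset_span ⟨⟨m', hm'⟩, rfl⟩
    · intro m hm1 hm2
      refine Ideal.span_mono ?_ (ih (by omega) m hm1 hm2)
      rintro x ⟨m0, rfl⟩
      have hmul : (t + 1) * r ≤ (t + 1 + 1) * r := Nat.mul_le_mul_right r (by omega)
      exact ⟨⟨(m0 : ℕ), by have := m0.isLt; omega⟩, rfl⟩

end TB
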